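/- For every natural number n ≥ 1, there do not exist a nonempty type D and a function P : D → ℝ such that every value P x lies in the finite set {k/n : k ∈ ℕ, k ≤ n} and both (⨆ x, (1 - |2 * P x - 1|)) = 1 and (⨅ x, ⨆ y, (1 - |P x - max 0 (2 * P y - 1)|)) = 1. (In other words, Hájek's sentence Φ := ∃x (P(x) ↔ ¬P(x)) & ∀x ∃y (P(x) ↔ P(y) & P(y)) is not 1-satisfiable in any structure over a finite MV-chain; this settles the second open problem of Montagna–Noguera negatively.) -/
import Mathlib

/-- A real number of the form `i / n` with `i : ℤ`, `0 < n`, is either `0` or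
has absolute value at least `1 / n`. -/
lemma hajek_div_dichotomy (n : ℕ) (hn : 0 < n) (t : ℝ) (i : ℤ)
    (ht : t = (i : ℝ) / n) : t = 0 ∨ 1 / (n : ℝ) ≤ |t| := by
  have hn' : (0 : ℝ) < n := by exact_mod_cast hn
  rcases eq_or_ne i 0 with h | h
  · left; simp [ht, h]
  · right
    have h1 : (1 : ℝ) ≤ |(i : ℝ)| := by
      have : (1 : ℤ) ≤ |i| := Int.one_le_abs h
      calc (1 : ℝ) ≤ ((|i| : ℤ) : ℝ) := by exact_mod_cast this
        _ = |(i : ℝ)| := by push_cast; rfl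
    rw [ht, abs_div, abs_of_pos hn']
    gcongr

/-- Hájek's sentence `Φ := ∃x (P(x) ↔ ¬P(x)) & ∀x ∃y (P(x) ↔ P(y) & P(y))` is not
`1`-satisfiable in any structure over a finite MV-chain (with `n + 1` elements,
`n ≥ 1`). -/
theorem hajek_sentence_finite_mv_unsat (n : ℕ) (hn : 1 ≤ n) :
    ¬ ∃ (D : Type) (_ : Nonempty D) (P : D → ℝ),
      (∀ x, ∃ k : ℕ, k ≤ n ∧ P x = (k : ℝ) / n) ∧
      (⨆ x, (1 - |2 * P x - 1|)) = 1 ∧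
      (⨅ x, ⨆ y, (1 - |P x - max 0 (2 * P y - 1)|)) = 1 := by
  rintro ⟨D, hD, P, hP, h1, h2⟩
  haveI := hD
  have hnn : 0 < n := hn
  have hn0 : (0 : ℝ) < n := by exact_mod_cast hnn
  have hninv : (0 : ℝ) < 1 / n := by positivity
  -- basic bounds on P
  have hP0 : ∀ x, 0 ≤ P x := by
    intro x; obtain ⟨k, _, he⟩ := hP x; rw [he]; positivity
  have hP1 : ∀ x, P x ≤ 1 := by
    intro x; obtain ⟨k, hk, he⟩ := hP x
    rw [he, div_le_one hn0]; exact_mod_cast hk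
  have hM0 : ∀ y : D, 0 ≤ max 0 (2 * P y - 1) := fun y => le_max_left _ _
  have hM1 : ∀ y : D, max 0 (2 * P y - 1) ≤ 1 :=
    fun y => max_le (by norm_num) (by linarith [hP1 y])
  -- representation of `max 0 (2 * P y - 1)` as an integer over n
  have hMrep : ∀ y : D, ∃ j : ℤ, max 0 (2 * P y - 1) = (j : ℝ) / n := by
    intro y
    obtain ⟨k, hk, he⟩ := hP y
    rcases le_total (2 * P y - 1) 0 with h | h
    · exact ⟨0, by rw [max_eq_left h]; simp⟩
    · refine ⟨2 * k - n, ?_⟩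
      rw [max_eq_right h, he]
      push_cast
      field_simp
  -- attainment for the first supremum: some x with P x = 1/2
  have ex0 : ∃ x : D, P x = 1 / 2 := by
    by_contra hc
    push_neg at hc
    have hub : ∀ x, 1 - |2 * P x - 1| ≤ 1 - 1 / n := by
      intro x
      obtain ⟨k, hk, he⟩ := hP x
      have hrep : 2 * P x - 1 = ((2 * (k : ℤ) - n : ℤ) : ℝ) / n := by
        rw [he]; push_cast; field_simp
      rcases hajek_div_dichotomy n hnn _ _ hrep with h | h
      · exact absurd (by linarith : P x = 1 / 2) (hc x)
      · linarith
    have := ciSup_le hub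
    rw [h1] at this
    linarith
  -- each inner supremum equals 1, so is attained; hence a "halving" witness exists
  have ex2 : ∀ x : D, ∃ y : D, max 0 (2 * P y - 1) = P x := by
    intro x
    have bddA : ∀ x' : D,
        BddAbove (Set.range fun y => 1 - |P x' - max 0 (2 * P y - 1)|) := by
      intro x'
      refine ⟨1, ?_⟩
      rintro _ ⟨y, rfl⟩
      dsimp only
      have := abs_nonneg (P x' - max 0 (2 * P y - 1))
      linarith
    have hge : ∀ x' : D, (0 : ℝ) ≤ ⨆ y, 1 - |P x' - max 0 (2 * P y - 1)| := by
      intro x'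
      have habs : |P x' - max 0 (2 * P x' - 1)| ≤ 1 := by
        rw [abs_le]
        constructor <;> [linarith [hP0 x', hM1 x']; linarith [hP1 x', hM0 x']]
      have h0 : (0 : ℝ) ≤ 1 - |P x' - max 0 (2 * P x' - 1)| := by linarith
      exact le_trans h0 (le_ciSup (bddA x') x')
    have hbb : BddBelow (Set.range fun x' => ⨆ y, 1 - |P x' - max 0 (2 * P y - 1)|) := by
      refine ⟨0, ?_⟩
      rintro _ ⟨x', rfl⟩
      exact hge x'
    have hinf_le := ciInf_le hbb x
    rw [h2] at hinf_le
    by_contra hc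
    push_neg at hc
    have hub : ∀ y, 1 - |P x - max 0 (2 * P y - 1)| ≤ 1 - 1 / n := by
      intro y
      obtain ⟨k, hk, hek⟩ := hP x
      obtain ⟨j, hej⟩ := hMrep y
      have hrep : P x - max 0 (2 * P y - 1) = (((k : ℤ) - j : ℤ) : ℝ) / n := by
        rw [hek, hej]; push_cast; ring
      rcases hajek_div_dichotomy n hnn _ _ hrep with h | h
      · exact absurd (by linarith : max 0 (2 * P y - 1) = P x) (hc y)
      · linarith
    have := ciSup_le hub
    linarith
  -- halving step: if 0 < P x then there is y with P y = (P x + 1)/2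
  have step : ∀ x : D, 0 < P x → ∃ y : D, P y = (P x + 1) / 2 := by
    intro x hx
    obtain ⟨y, hy⟩ := ex2 x
    refine ⟨y, ?_⟩
    have hpos : max 0 (2 * P y - 1) = 2 * P y - 1 := by
      rcases max_cases (0 : ℝ) (2 * P y - 1) with ⟨h, _⟩ | ⟨h, _⟩
      · rw [h] at hy; linarith
      · exact h
    rw [hpos] at hy
    linarith
  -- build the strictly increasing sequence via iteration
  obtain ⟨x0, hx0⟩ := ex0
  let g : D → D := fun x => if h : 0 < P x then (step x h).choose else x
  have hg : ∀ x : D, 0 < P x → P (g x) = (P x + 1) / 2 := by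
    intro x h
    simp only [g, dif_pos h]
    exact (step x h).choose_spec
  let S : ℕ → D := fun m => g^[m] x0
  have hS : ∀ m : ℕ, 0 < P (S m) ∧ P (S m) < 1 ∧ P (S m) < P (S (m + 1)) := by
    intro m
    induction m with
    | zero =>
      have h0 : P (S 0) = 1 / 2 := hx0
      have h1' : P (S 1) = (P (S 0) + 1) / 2 := by
        have : S 1 = g (S 0) := by
          show g^[1] x0 = g (g^[0] x0); simp
        rw [this]; exact hg _ (by rw [h0]; norm_num)
      refine ⟨by rw [h0]; norm_num, by rw [h0]; norm_num, ?_⟩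
      rw [h1', h0]; norm_num
    | succ m ih =>
      obtain ⟨hp, hl, hi⟩ := ih
      have hps : 0 < P (S (m + 1)) := lt_trans hp hi
      have hnext : S (m + 2) = g (S (m + 1)) := by
        show g^[m + 2] x0 = g (g^[m + 1] x0)
        rw [Function.iterate_succ_apply']
      have hval : P (S (m + 2)) = (P (S (m + 1)) + 1) / 2 := by
        rw [hnext]; exact hg _ hps
      have hls0 : P (S (m + 1)) < 1 := by
        have : S (m + 1) = g (S m) := by
          show g^[m + 1] x0 = g (g^[m] x0)
          rw [Function.iterate_succ_apply']
        rw [this, hg _ hp]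
        linarith
      exact ⟨hps, hls0, by rw [hval]; linarith⟩
  -- extract the numerators and get a strictly monotone ℕ-sequence bounded by n
  have hK : ∀ m : ℕ, ∃ k : ℕ, k ≤ n ∧ P (S m) = (k : ℝ) / n := fun m => hP (S m)
  let K : ℕ → ℕ := fun m => (hK m).choose
  have hKle : ∀ m, K m ≤ n := fun m => (hK m).choose_spec.1
  have hKval : ∀ m, P (S m) = ((K m : ℕ) : ℝ) / n := fun m => (hK m).choose_spec.2
  have hKmono : StrictMono K := by
    apply strictMono_nat_of_lt_succ
    intro m
    have := (hS m).2.2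
    rw [hKval m, hKval (m + 1)] at this
    have h' : ((K m : ℕ) : ℝ) < ((K (m + 1) : ℕ) : ℝ) := by
      exact (div_lt_div_iff_of_pos_right hn0).mp this
    exact_mod_cast h'
  have := hKmono.le_apply (x := n + 1)
  have := hKle (n + 1)
  omega
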